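/- If a Banach function space X(ℝⁿ) satisfies the weak doubling property (i.e., there exists τ > 1 such that liminf_{R→∞} inf_{y∈ℝⁿ} ‖χ_{B(y,τR)}‖_X / ‖χ_{B(y,R)}‖_X < ∞), then the infimum over all τ > 1 of the doubling constants D_{X,τ} := liminf_{R→∞} inf_{y∈ℝⁿ} ‖χ_{B(y,τR)}‖_X / ‖χ_{B(y,R)}‖_X equals 1. -/

import Mathlib

open MeasureTheory Filter ENNReal Metric

noncomputable section

/-- A Banach function norm on measurable functions over a measure space `α`,
following Bennett–Sharpley: axioms (A1)–(A5). -/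
structure BanachFunctionNorm (α : Type) [MeasureSpace α] where
  ρ : (α → ℝ≥0∞) → ℝ≥0∞
  ρ_zero : ∀ f, ρ f = 0 ↔ f =ᵐ[volume] 0
  ρ_smul : ∀ (a : NNReal) (f : α → ℝ≥0∞), ρ (fun x => (a : ℝ≥0∞) * f x) = a * ρ f
  ρ_add : ∀ f g, ρ (fun x => f x + g x) ≤ ρ f + ρ g
  ρ_mono : ∀ f g, (∀ᵐ x ∂volume, f x ≤ g x) → ρ f ≤ ρ g
  ρ_fatou : ∀ (f : ℕ → α → ℝ≥0∞),
      (∀ j, ∀ᵐ x ∂volume, f j x ≤ f (j+1) x) →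
      ρ (fun x => ⨆ j, f j x) = ⨆ j, ρ (f j)
  ρ_finite : ∀ E : Set α, MeasurableSet E → volume E < ⊤ → ρ (E.indicator 1) < ⊤
  ρ_loc_embed : ∀ E : Set α, MeasurableSet E → volume E < ⊤ →
      ∃ C : ℝ≥0∞, C < ⊤ ∧ ∀ f : α → ℝ≥0∞, ∫⁻ x in E, f x ∂volume ≤ C * ρ f

/-- The associate (Köthe dual) norm of a Banach function norm. -/
def BanachFunctionNorm.associate {α : Type} [MeasureSpace α]
    (X : BanachFunctionNorm α) (g : α → ℝ≥0∞) : ℝ≥0∞ :=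
  ⨆ f ∈ {f : α → ℝ≥0∞ | X.ρ f ≤ 1}, ∫⁻ x, f x * g x ∂volume

/-- The doubling constant `D_{X,τ}`. -/
def doublingConst {n : ℕ} (X : BanachFunctionNorm (EuclideanSpace ℝ (Fin n))) (τ : ℝ) : ℝ≥0∞ :=
  Filter.liminf (fun R : ℝ =>
    ⨅ y : EuclideanSpace ℝ (Fin n),
      X.ρ ((Metric.ball y (τ * R)).indicator 1) / X.ρ ((Metric.ball y R).indicator 1))
    Filter.atTop

namespace WeakDoublingAux

variable {n : ℕ} (X : BanachFunctionNorm (EuclideanSpace ℝ (Fin n)))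

/-- norm of ball indicator is nonzero when radius positive -/
lemma nb_ne_zero (y : EuclideanSpace ℝ (Fin n)) {R : ℝ} (hR : 0 < R) :
    X.ρ ((ball y R).indicator 1) ≠ 0 := by
  intro h0
  have hae : (ball y R).indicator (1 : EuclideanSpace ℝ (Fin n) → ℝ≥0∞) =ᵐ[volume] 0 :=
    (X.ρ_zero _).mp h0
  have hnull : volume {x : EuclideanSpace ℝ (Fin n) |
      ¬ (ball y R).indicator (1 : EuclideanSpace ℝ (Fin n) → ℝ≥0∞) x = (0 : ℝ≥0∞)} = 0 := by
    have := hae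
    rw [Filter.EventuallyEq, ae_iff] at this
    exact this
  have hsub : ball y R ⊆ {x : EuclideanSpace ℝ (Fin n) |
      ¬ (ball y R).indicator (1 : EuclideanSpace ℝ (Fin n) → ℝ≥0∞) x = (0 : ℝ≥0∞)} := by
    intro x hx
    simp only [Set.mem_setOf_eq, Set.indicator_of_mem hx, Pi.one_apply]
    exact one_ne_zero
  have : volume (ball y R) = 0 := measure_mono_null hsub hnull
  exact absurd this (measure_ball_pos volume y hR).ne'

lemma nb_ne_top (y : EuclideanSpace ℝ (Fin n)) (R : ℝ) :
    X.ρ ((ball y R).indicator 1) ≠ ⊤ :=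
  (X.ρ_finite _ measurableSet_ball measure_ball_lt_top).ne

lemma nb_mono (y : EuclideanSpace ℝ (Fin n)) {R R' : ℝ} (h : R ≤ R') :
    X.ρ ((ball y R).indicator 1) ≤ X.ρ ((ball y R').indicator 1) := by
  apply X.ρ_mono
  filter_upwards with x
  exact Set.indicator_le_indicator_of_subset (ball_subset_ball h) (fun _ => zero_le) x

lemma one_le_ratio (y : EuclideanSpace ℝ (Fin n)) {R R' : ℝ} (hR : 0 < R) (h : R ≤ R') :
    1 ≤ X.ρ ((ball y R').indicator 1) / X.ρ ((ball y R).indicator 1) := by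
  rw [ENNReal.le_div_iff_mul_le (Or.inl (nb_ne_zero X y hR)) (Or.inl (nb_ne_top X y R)),
    one_mul]
  exact nb_mono X y h

lemma one_le_doublingConst {τ : ℝ} (hτ : 1 ≤ τ) : 1 ≤ doublingConst X τ := by
  refine Filter.le_liminf_of_le (by isBoundedDefault) ?_
  filter_upwards [eventually_gt_atTop (0 : ℝ)] with R hR
  exact le_iInf fun y => one_le_ratio X y hR (le_mul_of_one_le_left hR.le hτ)

lemma div_mul_div_cancel' {a c d : ℝ≥0∞} (hc0 : c ≠ 0) (hct : c ≠ ⊤) :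
    a / c * (c / d) = a / d := by
  rw [div_eq_mul_inv, div_eq_mul_inv, div_eq_mul_inv, mul_assoc, ← mul_assoc c⁻¹,
    ENNReal.inv_mul_cancel hc0 hct, one_mul]

lemma ratio_chain {σ : ℝ} (hσ : 1 ≤ σ) (y : EuclideanSpace ℝ (Fin n)) {R : ℝ} (hR : 0 < R)
    (b : ℝ≥0∞) (m : ℕ)
    (hb : ∀ i < m, b ≤ X.ρ ((ball y (σ * (σ ^ i * R))).indicator 1) /
        X.ρ ((ball y (σ ^ i * R)).indicator 1)) :
    b ^ m ≤ X.ρ ((ball y (σ ^ m * R)).indicator 1) / X.ρ ((ball y R).indicator 1) := by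
  induction m with
  | zero =>
      simpa using one_le_ratio X y hR (by nlinarith : R ≤ σ ^ 0 * R)
  | succ m ih =>
      have hσm : (1:ℝ) ≤ σ ^ m := one_le_pow₀ hσ
      have hRm : 0 < σ ^ m * R := by positivity
      have key : X.ρ ((ball y (σ ^ (m+1) * R)).indicator 1) / X.ρ ((ball y R).indicator 1)
          = (X.ρ ((ball y (σ * (σ ^ m * R))).indicator 1) /
              X.ρ ((ball y (σ ^ m * R)).indicator 1)) *
            (X.ρ ((ball y (σ ^ m * R)).indicator 1) / X.ρ ((ball y R).indicator 1)) := by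
        rw [div_mul_div_cancel' (nb_ne_zero X y hRm) (nb_ne_top X y _)]
        ring_nf
      rw [key, pow_succ, mul_comm (b ^ m) b]
      exact mul_le_mul' (hb m (Nat.lt_succ_self m)) (ih fun i hi => hb i (hi.trans (Nat.lt_succ_self m)))

/-- Key estimate: `(doublingConst X σ)^m ≤ doublingConst X τ` bound, expressed through
arbitrary `b < doublingConst X σ` with `σ^m = τ`. -/
lemma pow_le_doublingConst {σ τ : ℝ} (hσ : 1 ≤ σ) {m : ℕ} (hτ : σ ^ m = τ)
    {b : ℝ≥0∞} (hb : b < doublingConst X σ) : b ^ m ≤ doublingConst X τ := by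
  have hev : ∀ᶠ R : ℝ in atTop, b < ⨅ y : EuclideanSpace ℝ (Fin n),
      X.ρ ((ball y (σ * R)).indicator 1) / X.ρ ((ball y R).indicator 1) :=
    eventually_lt_of_lt_liminf hb
  rcases (eventually_atTop.mp hev) with ⟨R₀, hR₀⟩
  refine Filter.le_liminf_of_le (by isBoundedDefault) ?_
  filter_upwards [eventually_ge_atTop (max R₀ 1)] with R hR
  have hR1 : (1:ℝ) ≤ R := le_trans (le_max_right _ _) hR
  have hRpos : (0:ℝ) < R := lt_of_lt_of_le one_pos hR1
  refine le_iInf fun y => ?_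
  have := ratio_chain X hσ y hRpos b m ?_
  · rwa [hτ] at this
  · intro i _
    have hRi : max R₀ 1 ≤ σ ^ i * R :=
      le_trans hR (le_mul_of_one_le_left hRpos.le (one_le_pow₀ hσ))
    exact le_of_lt (lt_of_lt_of_le (hR₀ _ (le_trans (le_max_left _ _) hRi))
      (iInf_le _ y))

end WeakDoublingAux


open WeakDoublingAux

/-- If a Banach function space on ℝⁿ satisfies the weak doubling property, then the infimum
over all τ > 1 of the doubling constants `D_{X,τ}` equals 1. -/
theorem weak_doubling_inf_doublingConst_eq_one {n : ℕ}
    (X : BanachFunctionNorm (EuclideanSpace ℝ (Fin n)))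
    (h : ∃ τ : ℝ, 1 < τ ∧ doublingConst X τ < ⊤) :
    ⨅ τ ∈ Set.Ioi (1 : ℝ), doublingConst X τ = 1 := by
  obtain ⟨τ₀, hτ₀, hC⟩ := h
  set C : ℝ≥0∞ := doublingConst X τ₀ with hCdef
  refine le_antisymm ?_ (le_iInf₂ fun τ hτ => one_le_doublingConst X (le_of_lt hτ))
  -- upper bound: for every a > 1 the infimum is ≤ a
  refine le_of_forall_gt_imp_ge_of_dense fun a ha => ?_
  rcases eq_or_ne a ⊤ with rfl | hat
  · exact le_top
  -- choose m with C ≤ a ^ m, m ≥ 1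
  obtain ⟨m₀, hm₀⟩ : ∃ m : ℕ, C.toNNReal < a.toNNReal ^ m := by
    apply pow_unbounded_of_one_lt
    have : (1:ℝ≥0∞) < a := ha
    rwa [← ENNReal.coe_lt_coe, ENNReal.coe_toNNReal hat, ENNReal.coe_one]
  set m : ℕ := m₀ + 1 with hm
  have hmpos : 0 < m := Nat.succ_pos _
  have ha1 : (1:ℝ≥0∞) ≤ a := ha.le
  have hCam : C ≤ a ^ m := by
    have h1 : C ≤ a ^ m₀ := by
      rw [← ENNReal.coe_toNNReal hat, ← ENNReal.coe_pow, ← ENNReal.coe_toNNReal hC.ne]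
      exact_mod_cast hm₀.le
    exact h1.trans (pow_le_pow_right₀ ha1 (Nat.le_succ m₀))
  -- the root scale
  set σ : ℝ := τ₀ ^ ((m:ℝ)⁻¹) with hσdef
  have hτ₀pos : (0:ℝ) < τ₀ := lt_trans one_pos hτ₀
  have hσ1 : 1 < σ := (Real.one_lt_rpow_iff_of_pos hτ₀pos).mpr
    (Or.inl ⟨hτ₀, by positivity⟩)
  have hσm : σ ^ m = τ₀ := by
    rw [hσdef, ← Real.rpow_natCast (τ₀ ^ ((m:ℝ)⁻¹)) m, ← Real.rpow_mul hτ₀pos.le,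
      inv_mul_cancel₀ (by exact_mod_cast hmpos.ne' : (m:ℝ) ≠ 0), Real.rpow_one]
  -- D_σ ≤ C^{1/m} ≤ a
  have hDσ : doublingConst X σ ≤ C ^ ((m:ℝ)⁻¹) := by
    by_contra hcon
    push_neg at hcon
    obtain ⟨b, hb1, hb2⟩ := exists_between hcon
    have hbm : b ^ m ≤ C := pow_le_doublingConst X hσ1.le hσm hb2
    have : b ≤ C ^ ((m:ℝ)⁻¹) := by
      have hb' : (b ^ m) ^ ((m:ℝ)⁻¹) ≤ C ^ ((m:ℝ)⁻¹) :=
        ENNReal.rpow_le_rpow hbm (by positivity)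
      rwa [← ENNReal.rpow_natCast b m, ← ENNReal.rpow_mul,
        mul_inv_cancel₀ (by exact_mod_cast hmpos.ne' : (m:ℝ) ≠ 0), ENNReal.rpow_one] at hb'
    exact absurd this (not_le.mpr hb1)
  have hCa : C ^ ((m:ℝ)⁻¹) ≤ a := by
    have h1 : C ^ ((m:ℝ)⁻¹) ≤ (a ^ m) ^ ((m:ℝ)⁻¹) :=
      ENNReal.rpow_le_rpow hCam (by positivity)
    rwa [← ENNReal.rpow_natCast a m, ← ENNReal.rpow_mul,
      mul_inv_cancel₀ (by exact_mod_cast hmpos.ne' : (m:ℝ) ≠ 0), ENNReal.rpow_one] at h1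
  calc ⨅ τ ∈ Set.Ioi (1:ℝ), doublingConst X τ ≤ doublingConst X σ :=
        biInf_le _ (Set.mem_Ioi.mpr hσ1)
    _ ≤ C ^ ((m:ℝ)⁻¹) := hDσ
    _ ≤ a := hCa
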